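/- Let 𝓗 = {h₁,…,h₆} be vectors in ℤ³ such that Σ_{i=1}^{6} h_i ⊗ h_i = C·Id for some positive constant C and such that {h_i ⊗ h_i}_{i=1}^{6} forms a basis of the space 𝕊 of symmetric 3×3 real matrices. Then there exists a positive constant 𝓜₀ = 𝓜₀(𝓗) such that for every N ≤ 𝓜₀ there are smooth functions Γ_{h_i} ∈ C^∞(S_N; (0,∞)), i = 1,…,6, defined on the set S_N := {Id − K : K symmetric, |K|_∞ ≤ N}, satisfying Id − K = Σ_{i=1}^{6} Γ_{h_i}²(Id − K) (h_i ⊗ h_i) for every Id − K ∈ S_N. -/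

import Mathlib

open Real

noncomputable section

/-- 3×3 real matrices (as nested functions). -/
abbrev M3 := Fin 3 → Fin 3 → ℝ

/-- The identity matrix. -/
def idm : M3 := fun i j => if i = j then 1 else 0

/-- The outer product h ⊗ h of an integer vector with itself (as a real matrix). -/
def outer (h : Fin 3 → ℤ) : M3 := fun i j => (h i : ℝ) * (h j : ℝ)

/-- Symmetric matrices. -/
def SymmM (A : M3) : Prop := ∀ i j, A i j = A j i

/-- The set S_N = {Id − K : K symmetric, |K|_∞ ≤ N}. -/
def SN (N : ℝ) : Set M3 :=
  {A | ∃ K : M3, SymmM K ∧ (∀ i j, |K i j| ≤ N) ∧ A = idm - K}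

/-- **Geometric Lemma I.** If `𝓗 = {h₁,…,h₆} ⊂ ℤ³` satisfies
`Σ h_i ⊗ h_i = C·Id` for some `C > 0` and `{h_i ⊗ h_i}` is a basis of the symmetric
3×3 matrices, then there is `𝓜₀ > 0` such that for every `0 < N ≤ 𝓜₀` there are smooth
positive functions `Γ_{h_i}` on `S_N` with `Id − K = Σ Γ_{h_i}(Id−K)² h_i ⊗ h_i` on `S_N`. -/
theorem geometric_lemma_I (h : Fin 6 → Fin 3 → ℤ) (C : ℝ) (hC : 0 < C)
    (hid : ∀ i j : Fin 3, (∑ k : Fin 6, outer (h k) i j) = C * idm i j)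
    (hindep : LinearIndependent ℝ fun k : Fin 6 => outer (h k))
    (hspan : ∀ A : M3, SymmM A →
      A ∈ Submodule.span ℝ (Set.range fun k : Fin 6 => outer (h k))) :
    ∃ M0 : ℝ, 0 < M0 ∧ ∀ N : ℝ, 0 < N → N ≤ M0 →
      ∃ Γ : Fin 6 → M3 → ℝ,
        (∀ k, ∀ n : ℕ, ContDiffOn ℝ n (Γ k) (SN N)) ∧
        (∀ k, ∀ A ∈ SN N, 0 < Γ k A) ∧
        (∀ A ∈ SN N, ∀ i j, A i j = ∑ k : Fin 6, (Γ k A) ^ 2 * outer (h k) i j) := by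
  classical
  set v : Fin 6 → M3 := fun k => outer (h k) with hv
  set S : Submodule ℝ M3 := Submodule.span ℝ (Set.range v) with hSdef
  let b : Module.Basis (Fin 6) ℝ S := Module.Basis.span hindep
  have hb : ∀ i, ((b i : S) : M3) = v i := fun i => congrArg Subtype.val (Module.Basis.span_apply hindep i)
  have hext : ∀ k : Fin 6, ∃ g : M3 →ₗ[ℝ] ℝ, g.comp S.subtype = b.coord k :=
    fun k => LinearMap.exists_extend (b.coord k)
  choose L hL using hext
  have hLA : ∀ (k : Fin 6) (A : M3) (hA : A ∈ S), L k A = b.repr ⟨A, hA⟩ k := by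
    intro k A hA
    have := LinearMap.ext_iff.mp (hL k) ⟨A, hA⟩
    simpa [Module.Basis.coord] using this
  -- representation
  have hrep : ∀ (A : M3) (hA : A ∈ S), A = ∑ k, b.repr ⟨A, hA⟩ k • v k := by
    intro A hA
    have h1 : ((⟨A, hA⟩ : S) : M3) = ((∑ k, b.repr ⟨A, hA⟩ k • b k : S) : M3) := by
      rw [b.sum_repr ⟨A, hA⟩]
    simpa [hb, -Module.Basis.sum_repr] using h1
  -- idm ∈ S
  have hsymid : SymmM idm := by
    intro i j; unfold idm; by_cases hij : i = j <;> simp [hij, eq_comm]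
  have hidS : idm ∈ S := hspan idm hsymid
  -- idm = C⁻¹ • ∑ v k
  have hidm_eq : idm = C⁻¹ • ∑ k, v k := by
    funext i j
    have := hid i j
    have : (∑ k, v k) i j = C * idm i j := by
      simpa [Finset.sum_apply] using this
    simp only [Pi.smul_apply, Finset.sum_apply, smul_eq_mul] at *
    rw [this]
    field_simp
  -- coordinates of idm
  have hLid : ∀ k, L k idm = C⁻¹ := by
    intro k
    rw [hLA k idm hidS]
    have hmem : (∑ k, v k) ∈ S := by
      apply Submodule.sum_mem
      intro k _
      exact Submodule.subset_span ⟨k, rfl⟩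
    have hsub : (⟨idm, hidS⟩ : S) = C⁻¹ • ∑ j, b j := by
      apply Subtype.ext
      show idm = ((C⁻¹ • ∑ j, b j : S) : M3)
      rw [hidm_eq]
      simp [hb]
    rw [hsub]
    simp [Module.Basis.repr_self, Finsupp.single_apply]
  -- continuous linear maps
  let Lc : Fin 6 → M3 →L[ℝ] ℝ := fun k => (L k).toContinuousLinearMap
  set c : ℝ := ∑ k, ‖Lc k‖ with hc
  have hc0 : 0 ≤ c := Finset.sum_nonneg fun k _ => norm_nonneg _
  have hck : ∀ k, ‖Lc k‖ ≤ c :=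
    fun k => Finset.single_le_sum (fun k _ => norm_nonneg (Lc k)) (Finset.mem_univ k)
  refine ⟨(2 * C * (c + 1))⁻¹, by positivity, ?_⟩
  intro N hN hNle
  -- membership in S and positivity bound
  have hAS : ∀ A ∈ SN N, A ∈ S := by
    rintro A ⟨K, hKs, _, rfl⟩
    apply hspan
    intro i j
    simp [idm, hKs i j, Pi.sub_apply]
    by_cases hij : i = j <;> simp [hij, eq_comm]
  have hnorm : ∀ A ∈ SN N, ‖A - idm‖ ≤ N := by
    rintro A ⟨K, _, hKb, rfl⟩
    have : idm - K - idm = -K := by abel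
    rw [this]
    rw [pi_norm_le_iff_of_nonneg hN.le]
    intro i
    rw [pi_norm_le_iff_of_nonneg hN.le]
    intro j
    simpa [Real.norm_eq_abs, abs_neg] using hKb i j
  have hpos : ∀ k, ∀ A ∈ SN N, (2 * C)⁻¹ ≤ L k A := by
    intro k A hA
    have hdiff : |L k A - L k idm| ≤ c * N := by
      have h1 : L k A - L k idm = Lc k (A - idm) := by
        simp [Lc, map_sub]
      rw [h1]
      calc |Lc k (A - idm)| ≤ ‖Lc k‖ * ‖A - idm‖ := (Lc k).le_opNorm _
        _ ≤ c * N := by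
            apply mul_le_mul (hck k) (hnorm A hA) (norm_nonneg _) hc0
    have hLidk := hLid k
    have hcN : c * N ≤ (2 * C)⁻¹ := by
      have h2 : c * N ≤ c * (2 * C * (c + 1))⁻¹ := by
        apply mul_le_mul_of_nonneg_left hNle hc0
      have h3 : c * (2 * C * (c + 1))⁻¹ ≤ (2 * C)⁻¹ := by
        rw [mul_inv]
        have h4 : c * (c + 1)⁻¹ ≤ 1 := by
          rw [← div_eq_mul_inv, div_le_one (by positivity : (0:ℝ) < c + 1)]
          linarith
        calc c * ((2 * C)⁻¹ * (c + 1)⁻¹) = (c * (c + 1)⁻¹) * (2 * C)⁻¹ := by ring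
          _ ≤ 1 * (2 * C)⁻¹ := by
              apply mul_le_mul_of_nonneg_right h4 (by positivity)
          _ = (2 * C)⁻¹ := one_mul _
      linarith
    rw [hLidk] at hdiff
    have habs := (abs_le.mp hdiff).1
    have hCC : C⁻¹ = (2*C)⁻¹ + (2*C)⁻¹ := by field_simp; ring
    linarith
  have hposA : ∀ k, ∀ A ∈ SN N, 0 < L k A := by
    intro k A hA
    have := hpos k A hA
    have : (0:ℝ) < (2 * C)⁻¹ := by positivity
    linarith [hpos k A hA]
  refine ⟨fun k A => Real.sqrt (L k A), ?_, ?_, ?_⟩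
  · intro k n
    intro A hA
    apply ContDiffAt.contDiffWithinAt
    exact (Real.contDiffAt_sqrt (ne_of_gt (hposA k A hA))).comp A ((Lc k).contDiff.contDiffAt)
  · intro k A hA
    exact Real.sqrt_pos.mpr (hposA k A hA)
  · intro A hA i j
    have hrepA := hrep A (hAS A hA)
    have heval : A i j = ∑ k, b.repr ⟨A, hAS A hA⟩ k * v k i j := by
      conv_lhs => rw [hrepA]
      simp [Finset.sum_apply]
    rw [heval]
    apply Finset.sum_congr rfl
    intro k _
    rw [Real.sq_sqrt (hposA k A hA).le, hLA k A (hAS A hA)]
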